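/- The Malthusian parameter λ is differentiable at every point of U₁ ∪ U₂, and its gradient is given by: for x ∈ U₁, ∇λ(x) = (e^{-λ(x) x_b} / G(x), 0), and for x ∈ U₂, ∇λ(x) = (0, e^{-λ(x) x_d} / G(x)). -/

import Mathlib

open MeasureTheory Set Filter

noncomputable section

/-- The viable set `𝒱 = {(x_b, x_d) : min(x_b, x_d) > 1}`. -/
def viable : Set (ℝ × ℝ) := {x : ℝ × ℝ | 1 < min x.1 x.2}

/-- `U₁ = {x ∈ 𝒱 : x_b < x_d}`. -/
def U1 : Set (ℝ × ℝ) := {x ∈ viable | x.1 < x.2}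

/-- `U₂ = {x ∈ 𝒱 : x_d < x_b}`. -/
def U2 : Set (ℝ × ℝ) := {x ∈ viable | x.2 < x.1}

/-- `lam` is a Malthusian parameter function on `𝒱`. -/
def IsMalthusian (lam : ℝ × ℝ → ℝ) : Prop :=
  ∀ x ∈ viable, 0 < lam x ∧ (∫ a in (0:ℝ)..(min x.1 x.2), Real.exp (-(lam x) * a)) = 1

/-- The mean generation time `G(x) = ∫₀^{min(x_b,x_d)} a e^{-λ(x) a} da`. -/
def genTime (lam : ℝ × ℝ → ℝ) (x : ℝ × ℝ) : ℝ :=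
  ∫ a in (0:ℝ)..(min x.1 x.2), a * Real.exp (-(lam x) * a)


/-- `φ(l) = -log(1-l)/l`, the inverse relation: `m = φ(λ)`. -/
def phiM (l : ℝ) : ℝ := -Real.log (1 - l) / l

lemma integral_exp_neg (l m : ℝ) (hl : l ≠ 0) :
    (∫ a in (0:ℝ)..m, Real.exp (-l * a)) = (1 - Real.exp (-l * m)) / l := by
  have key : ∀ a : ℝ, HasDerivAt (fun a => -Real.exp (-l * a) / l) (Real.exp (-l * a)) a := by
    intro a
    have h1 : HasDerivAt (fun a : ℝ => -l * a) (-l) a := by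
      simpa using (hasDerivAt_id a).const_mul (-l)
    have h2 := (h1.exp.neg.div_const l)
    refine h2.congr_deriv ?_
    field_simp
  rw [intervalIntegral.integral_eq_sub_of_hasDerivAt (fun a _ => key a)
    ((Real.continuous_exp.comp (by continuity)).intervalIntegrable 0 m)]
  simp
  field_simp
  ring

lemma integral_mul_exp_neg (l m : ℝ) (hl : l ≠ 0) :
    (∫ a in (0:ℝ)..m, a * Real.exp (-l * a)) =
      (1 - (1 + l * m) * Real.exp (-l * m)) / l ^ 2 := by
  have key : ∀ a : ℝ, HasDerivAt (fun a => -((a / l + 1 / l ^ 2) * Real.exp (-l * a)))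
      (a * Real.exp (-l * a)) a := by
    intro a
    have h1 : HasDerivAt (fun a : ℝ => -l * a) (-l) a := by
      simpa using (hasDerivAt_id a).const_mul (-l)
    have h2 : HasDerivAt (fun a : ℝ => a / l + 1 / l ^ 2) (1 / l) a := by
      have := ((hasDerivAt_id a).div_const l).add_const ((1:ℝ) / l ^ 2)
      simp only [id] at this
      convert this using 2
    have h3 := (h2.mul h1.exp).neg
    refine h3.congr_deriv ?_
    field_simp
    ring
  rw [intervalIntegral.integral_eq_sub_of_hasDerivAt (fun a _ => key a)
    ((continuous_id.mul (Real.continuous_exp.comp (by continuity))).intervalIntegrable 0 m)]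
  simp
  field_simp
  ring

lemma phiM_hasStrictDerivAt {l : ℝ} (h0 : 0 < l) (h1 : l < 1) :
    HasStrictDerivAt phiM ((l / (1 - l) + Real.log (1 - l)) / l ^ 2) l := by
  have hne : (1:ℝ) - l ≠ 0 := by linarith
  have hl : HasStrictDerivAt (fun l : ℝ => 1 - l) (-1) l := by
    simpa using (hasStrictDerivAt_id l).const_sub 1
  have hlog : HasStrictDerivAt (fun l : ℝ => -Real.log (1 - l)) (1 / (1 - l)) l := by
    have := ((Real.hasStrictDerivAt_log hne).comp l hl).neg
    refine this.congr_deriv ?_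
    field_simp
  have := hlog.div (hasStrictDerivAt_id l) (ne_of_gt h0)
  refine this.congr_deriv ?_
  have hll : l ≠ 0 := ne_of_gt h0
  simp only [id]
  field_simp
  ring

lemma phiM_deriv_pos {l : ℝ} (h0 : 0 < l) (h1 : l < 1) :
    0 < (l / (1 - l) + Real.log (1 - l)) / l ^ 2 := by
  have h2 : (0:ℝ) < 1 - l := by linarith
  have h3 : Real.log (1 - l)⁻¹ < (1 - l)⁻¹ - 1 :=
    Real.log_lt_sub_one_of_pos (by positivity) (by
      intro h
      have : (1:ℝ) - l = 1 := by field_simp at h; linarith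
      linarith)
  rw [Real.log_inv] at h3
  have : -Real.log (1 - l) < l / (1 - l) := by
    have : (1 - l)⁻¹ - 1 = l / (1 - l) := by field_simp; ring
    linarith
  apply div_pos (by linarith) (by positivity)

lemma phiM_gt_one {l : ℝ} (h0 : 0 < l) (h1 : l < 1) : 1 < phiM l := by
  have h2 : (0:ℝ) < 1 - l := by linarith
  have h3 : Real.log (1 - l) < (1 - l) - 1 :=
    Real.log_lt_sub_one_of_pos h2 (by intro h; linarith)
  unfold phiM
  rw [lt_div_iff₀ h0]
  linarith

lemma phiM_injOn : InjOn phiM (Ioo (0:ℝ) 1) := by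
  apply StrictMonoOn.injOn
  apply strictMonoOn_of_deriv_pos (convex_Ioo 0 1)
  · intro l hl
    exact ((phiM_hasStrictDerivAt hl.1 hl.2).hasDerivAt.continuousAt).continuousWithinAt
  · intro l hl
    rw [interior_Ioo] at hl
    rw [(phiM_hasStrictDerivAt hl.1 hl.2).hasDerivAt.deriv]
    exact phiM_deriv_pos hl.1 hl.2

lemma mal_facts {lam : ℝ × ℝ → ℝ} (hlam : IsMalthusian lam) {x : ℝ × ℝ} (hx : x ∈ viable) :
    0 < lam x ∧ lam x < 1 ∧ Real.exp (-(lam x) * min x.1 x.2) = 1 - lam x := by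
  obtain ⟨h0, h1⟩ := hlam x hx
  rw [integral_exp_neg _ _ (ne_of_gt h0), div_eq_one_iff_eq (ne_of_gt h0)] at h1
  have he : Real.exp (-(lam x) * min x.1 x.2) = 1 - lam x := by linarith
  refine ⟨h0, ?_, he⟩
  have := Real.exp_pos (-(lam x) * min x.1 x.2)
  rw [he] at this; linarith

lemma mal_phiM {lam : ℝ × ℝ → ℝ} (hlam : IsMalthusian lam) {x : ℝ × ℝ} (hx : x ∈ viable) :
    phiM (lam x) = min x.1 x.2 := by
  obtain ⟨h0, h1, he⟩ := mal_facts hlam hx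
  have hlog : Real.log (1 - lam x) = -(lam x) * min x.1 x.2 := by
    rw [← he, Real.log_exp]
  unfold phiM
  rw [hlog]
  field_simp

lemma mal_mem_Ioo {lam : ℝ × ℝ → ℝ} (hlam : IsMalthusian lam) {x : ℝ × ℝ} (hx : x ∈ viable) :
    lam x ∈ Ioo (0:ℝ) 1 := ⟨(mal_facts hlam hx).1, (mal_facts hlam hx).2.1⟩

/-- Uniqueness: `lam x` depends only on `min x.1 x.2`. -/
lemma mal_eq_diag {lam : ℝ × ℝ → ℝ} (hlam : IsMalthusian lam) {x : ℝ × ℝ} (hx : x ∈ viable) :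
    lam x = lam (min x.1 x.2, min x.1 x.2) := by
  have hd : (min x.1 x.2, min x.1 x.2) ∈ viable := by
    simp only [viable, mem_setOf_eq, min_self] at hx ⊢; exact hx
  apply phiM_injOn (mal_mem_Ioo hlam hx) (mal_mem_Ioo hlam hd)
  rw [mal_phiM hlam hx, mal_phiM hlam hd]
  simp

lemma key_deriv {lam : ℝ × ℝ → ℝ} (hlam : IsMalthusian lam) {m₀ : ℝ} (hm : 1 < m₀) :
    HasStrictDerivAt (fun m => lam (m, m))
      (Real.exp (-(lam (m₀, m₀)) * m₀) /
        (∫ a in (0:ℝ)..m₀, a * Real.exp (-(lam (m₀, m₀)) * a))) m₀ := by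
  set g : ℝ → ℝ := fun m => lam (m, m) with hg_def
  have hdiag : ∀ m : ℝ, 1 < m → (m, m) ∈ viable := by
    intro m hm1; simp [viable, hm1]
  have hd₀ := hdiag m₀ hm
  set l₀ := lam (m₀, m₀) with hl₀
  obtain ⟨h0, h1, he⟩ := mal_facts hlam hd₀
  simp only [min_self] at he
  have hlog : Real.log (1 - l₀) = -l₀ * m₀ := by rw [← he, Real.log_exp]
  set D : ℝ := (l₀ / (1 - l₀) + Real.log (1 - l₀)) / l₀ ^ 2 with hD_def
  have hDpos : 0 < D := phiM_deriv_pos h0 h1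
  have hstrict := phiM_hasStrictDerivAt h0 h1
  have hphi₀ : phiM l₀ = m₀ := by
    have := mal_phiM hlam hd₀; simpa using this
  -- local left inverse
  have hg : ∀ᶠ l in nhds l₀, g (phiM l) = l := by
    filter_upwards [Ioo_mem_nhds h0 h1] with l hl
    have hgt := phiM_gt_one hl.1 hl.2
    have hv := hdiag _ hgt
    apply phiM_injOn (mal_mem_Ioo hlam hv) hl
    have := mal_phiM hlam hv; simpa using this
  have hder : HasStrictDerivAt g D⁻¹ m₀ := by
    have := hstrict.to_local_left_inverse (ne_of_gt hDpos) hg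
    rwa [hphi₀] at this
  -- identify the derivative value
  have hl0 : l₀ ≠ 0 := ne_of_gt h0
  have hl1 : (1:ℝ) - l₀ ≠ 0 := by linarith
  have hG : (∫ a in (0:ℝ)..m₀, a * Real.exp (-l₀ * a)) = (1 - l₀) * D := by
    rw [integral_mul_exp_neg _ _ hl0, he, hD_def, hlog]
    field_simp
    ring
  have hval : Real.exp (-l₀ * m₀) / (∫ a in (0:ℝ)..m₀, a * Real.exp (-l₀ * a)) = D⁻¹ := by
    rw [hG, he]
    field_simp
    rfl
  rw [← hval] at hder
  exact hder

lemma isOpen_U1 : IsOpen U1 := by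
  have : U1 = {x : ℝ × ℝ | 1 < min x.1 x.2} ∩ {x : ℝ × ℝ | x.1 < x.2} := by
    ext x; simp [U1, viable]
  rw [this]
  exact (isOpen_lt continuous_const (continuous_fst.min continuous_snd)).inter
    (isOpen_lt continuous_fst continuous_snd)

lemma isOpen_U2 : IsOpen U2 := by
  have : U2 = {x : ℝ × ℝ | 1 < min x.1 x.2} ∩ {x : ℝ × ℝ | x.2 < x.1} := by
    ext x; simp [U2, viable]
  rw [this]
  exact (isOpen_lt continuous_const (continuous_fst.min continuous_snd)).inter
    (isOpen_lt continuous_snd continuous_fst)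

/-- The Malthusian parameter is differentiable on `U₁ ∪ U₂`, with gradient
`(e^{-λ(x) x_b}/G(x), 0)` on `U₁` and `(0, e^{-λ(x) x_d}/G(x))` on `U₂`. -/
theorem malthus_gradient (lam : ℝ × ℝ → ℝ) (hlam : IsMalthusian lam) :
    (∀ x ∈ U1, HasFDerivAt lam
      ((Real.exp (-(lam x) * x.1) / genTime lam x) • ContinuousLinearMap.fst ℝ ℝ ℝ) x) ∧
    (∀ x ∈ U2, HasFDerivAt lam
      ((Real.exp (-(lam x) * x.2) / genTime lam x) • ContinuousLinearMap.snd ℝ ℝ ℝ) x) := by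

  constructor
  · intro x hx
    have hxv : x ∈ viable := hx.1
    have hmin : min x.1 x.2 = x.1 := min_eq_left (le_of_lt hx.2)
    have hm : 1 < x.1 := by have := hxv; rwa [viable, mem_setOf_eq, hmin] at this
    have hlx : lam x = lam (x.1, x.1) := by
      have := mal_eq_diag hlam hxv
      rwa [hmin] at this
    have hder := key_deriv hlam hm
    set d := Real.exp (-(lam (x.1, x.1)) * x.1) /
      (∫ a in (0:ℝ)..x.1, a * Real.exp (-(lam (x.1, x.1)) * a)) with hd_def
    have hF : HasFDerivAt (fun y : ℝ × ℝ => lam (y.1, y.1))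
        (d • ContinuousLinearMap.fst ℝ ℝ ℝ) x := by
      have hcomp := hder.hasDerivAt.hasFDerivAt.comp x
        (ContinuousLinearMap.fst ℝ ℝ ℝ).hasFDerivAt
      refine hcomp.congr_fderiv ?_
      refine ContinuousLinearMap.ext fun v => ?_
      simp [mul_comm]
    have heq : (fun y : ℝ × ℝ => lam (y.1, y.1)) =ᶠ[nhds x] lam := by
      filter_upwards [isOpen_U1.mem_nhds hx] with y hy
      have hyv : y ∈ viable := hy.1
      have hymin : min y.1 y.2 = y.1 := min_eq_left (le_of_lt hy.2)
      have := mal_eq_diag hlam hyv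
      rw [hymin] at this
      exact this.symm
    have hF' := hF.congr_of_eventuallyEq heq.symm
    have : Real.exp (-(lam x) * x.1) / genTime lam x = d := by
      rw [hd_def, hlx, genTime, hmin, hlx]
    rwa [this]
  · intro x hx
    have hxv : x ∈ viable := hx.1
    have hmin : min x.1 x.2 = x.2 := min_eq_right (le_of_lt hx.2)
    have hm : 1 < x.2 := by have := hxv; rwa [viable, mem_setOf_eq, hmin] at this
    have hlx : lam x = lam (x.2, x.2) := by
      have := mal_eq_diag hlam hxv
      rwa [hmin] at this
    have hder := key_deriv hlam hm
    set d := Real.exp (-(lam (x.2, x.2)) * x.2) /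
      (∫ a in (0:ℝ)..x.2, a * Real.exp (-(lam (x.2, x.2)) * a)) with hd_def
    have hF : HasFDerivAt (fun y : ℝ × ℝ => lam (y.2, y.2))
        (d • ContinuousLinearMap.snd ℝ ℝ ℝ) x := by
      have hcomp := hder.hasDerivAt.hasFDerivAt.comp x
        (ContinuousLinearMap.snd ℝ ℝ ℝ).hasFDerivAt
      refine hcomp.congr_fderiv ?_
      refine ContinuousLinearMap.ext fun v => ?_
      simp [mul_comm]
    have heq : (fun y : ℝ × ℝ => lam (y.2, y.2)) =ᶠ[nhds x] lam := by
      filter_upwards [isOpen_U2.mem_nhds hx] with y hy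
      have hyv : y ∈ viable := hy.1
      have hymin : min y.1 y.2 = y.2 := min_eq_right (le_of_lt hy.2)
      have := mal_eq_diag hlam hyv
      rw [hymin] at this
      exact this.symm
    have hF' := hF.congr_of_eventuallyEq heq.symm
    have : Real.exp (-(lam x) * x.2) / genTime lam x = d := by
      rw [hd_def, hlx, genTime, hmin, hlx]
    rwa [this]
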